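/- For any matrix A ∈ ℝ^{M×N}, any matrices D_h, D_v ∈ ℝ^{N×N}, any vector g ∈ ℝ^M and any μ > 0, the isotropic ℓ⁰-gradient super-resolution functional Φ(u) = (1/2)‖Au − g‖² + μ‖(D_h u, D_v u)‖_{0,2} attains its minimum over ℝ^N, i.e. there exists u* ∈ ℝ^N with Φ(u*) ≤ Φ(u) for all u ∈ ℝ^N. -/

import Mathlib

open Matrix Filter Topology

/-- Euclidean norm of a vector in `ℝ^n`. -/
noncomputable def eucNorm {n : ℕ} (v : Fin n → ℝ) : ℝ :=
  Real.sqrt (∑ i, (v i) ^ 2)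

/-- ℓ⁰ "norm": number of nonzero entries of a vector. -/
noncomputable def l0 {n : ℕ} (v : Fin n → ℝ) : ℕ :=
  (Finset.univ.filter fun i => v i ≠ 0).card

/-- Isotropic ℓ⁰ count: number of indices where the pair of entries is nonzero. -/
noncomputable def l02 {n : ℕ} (zh zv : Fin n → ℝ) : ℕ :=
  (Finset.univ.filter fun i => zh i ≠ 0 ∨ zv i ≠ 0).card

/-- the isotropic ℓ⁰-gradient super-resolution functional attains
its minimum over ℝ^N. -/
theorem isotropic_l0_SR_existence (M N : ℕ) (A : Matrix (Fin M) (Fin N) ℝ)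
    (Dh Dv : Matrix (Fin N) (Fin N) ℝ) (g : Fin M → ℝ) (μ : ℝ) (hμ : 0 < μ) :
    ∃ ustar : Fin N → ℝ, ∀ u : Fin N → ℝ,
      1 / 2 * eucNorm (A.mulVec ustar - g) ^ 2
          + μ * (l02 (Dh.mulVec ustar) (Dv.mulVec ustar) : ℝ)
        ≤ 1 / 2 * eucNorm (A.mulVec u - g) ^ 2
          + μ * (l02 (Dh.mulVec u) (Dv.mulVec u) : ℝ) := by
  classical
  set E := EuclideanSpace ℝ (Fin M) with hE
  let e : (Fin M → ℝ) ≃ₗ[ℝ] E := (WithLp.linearEquiv 2 ℝ (Fin M → ℝ)).symm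
  let f : (Fin N → ℝ) →ₗ[ℝ] E := e.toLinearMap ∘ₗ A.mulVecLin
  let gE : E := e g
  have henorm : ∀ v : Fin M → ℝ, eucNorm v = ‖e v‖ := by
    intro v
    rw [eucNorm, EuclideanSpace.norm_eq]
    congr 1
    refine Finset.sum_congr rfl fun i _ => ?_
    rw [Real.norm_eq_abs, sq_abs]
    rfl
  -- subspace of vectors with gradient support inside S
  let V : Finset (Fin N) → Submodule ℝ (Fin N → ℝ) := fun S =>
    { carrier := {u | ∀ i ∉ S, Dh.mulVec u i = 0 ∧ Dv.mulVec u i = 0}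
      add_mem' := by
        intro a b ha hb i hi
        simp [Matrix.mulVec_add, (ha i hi).1, (ha i hi).2,
          (hb i hi).1, (hb i hi).2]
      zero_mem' := by
        intro i hi
        simp [Matrix.mulVec_zero]
      smul_mem' := by
        intro c a ha i hi
        simp [Matrix.mulVec_smul, (ha i hi).1, (ha i hi).2] }
  let K : Finset (Fin N) → Submodule ℝ E := fun S => (V S).map f
  let P : Finset (Fin N) → E := fun S => ((K S).orthogonalProjectionOnto gE : E)
  -- the projection minimizes squared distance
  have hPmin : ∀ S, ∀ w ∈ K S, ‖gE - P S‖ ^ 2 ≤ ‖gE - w‖ ^ 2 := by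
    intro S w hw
    have horth : gE - P S ∈ (K S)ᗮ := (K S).sub_starProjection_mem_orthogonal gE
    have hmem : P S - w ∈ K S := sub_mem ((K S).orthogonalProjectionOnto gE).2 hw
    have hinner : inner ℝ (gE - P S) (P S - w) = (0 : ℝ) := by
      rw [real_inner_comm]; exact horth _ hmem
    have : gE - w = (gE - P S) + (P S - w) := by abel
    rw [this, norm_add_sq_real, hinner]
    nlinarith [sq_nonneg ‖P S - w‖, norm_nonneg (P S - w)]
  -- choose preimages of projections
  have hPmem : ∀ S, ∃ u ∈ V S, f u = P S := by
    intro S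
    have := ((K S).orthogonalProjectionOnto gE).2
    rwa [Submodule.mem_map] at this
  choose us husV husP using hPmem
  -- the objective function
  set φ : (Fin N → ℝ) → ℝ := fun u =>
    1 / 2 * eucNorm (A.mulVec u - g) ^ 2
      + μ * (l02 (Dh.mulVec u) (Dv.mulVec u) : ℝ) with hφ
  have hfe : ∀ u : Fin N → ℝ, eucNorm (A.mulVec u - g) ^ 2 = ‖gE - f u‖ ^ 2 := by
    intro u
    rw [henorm]
    rw [show e (A.mulVec u - g) = f u - gE by
      simp [f, gE, map_sub, Matrix.mulVecLin_apply]]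
    rw [norm_sub_rev]
  have hl02 : ∀ S, (l02 (Dh.mulVec (us S)) (Dv.mulVec (us S)) : ℝ) ≤ S.card := by
    intro S
    have hsub : (Finset.univ.filter fun i =>
        Dh.mulVec (us S) i ≠ 0 ∨ Dv.mulVec (us S) i ≠ 0) ⊆ S := by
      intro i hi
      rw [Finset.mem_filter] at hi
      by_contra hiS
      rcases hi.2 with h | h
      · exact h (husV S i hiS).1
      · exact h (husV S i hiS).2
    exact_mod_cast Finset.card_le_card hsub
  -- key bound
  have key : ∀ S : Finset (Fin N), ∀ u ∈ V S,
      φ (us S) ≤ 1 / 2 * ‖gE - f u‖ ^ 2 + μ * S.card := by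
    intro S u hu
    have h1 : ‖gE - f (us S)‖ ^ 2 ≤ ‖gE - f u‖ ^ 2 := by
      rw [husP S]
      exact hPmin S (f u) (Submodule.mem_map_of_mem hu)
    have h2 : μ * (l02 (Dh.mulVec (us S)) (Dv.mulVec (us S)) : ℝ) ≤ μ * S.card :=
      mul_le_mul_of_nonneg_left (hl02 S) hμ.le
    calc φ (us S) = 1 / 2 * ‖gE - f (us S)‖ ^ 2
          + μ * (l02 (Dh.mulVec (us S)) (Dv.mulVec (us S)) : ℝ) := by
            rw [hφ]; simp only [hfe]
      _ ≤ 1 / 2 * ‖gE - f u‖ ^ 2 + μ * S.card := by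
            have := h1
            linarith
  -- minimize over finitely many subsets
  obtain ⟨S0, -, hS0⟩ := Finset.exists_min_image
    (Finset.univ : Finset (Finset (Fin N))) (fun S => φ (us S))
    ⟨∅, Finset.mem_univ _⟩
  refine ⟨us S0, fun u => ?_⟩
  set S : Finset (Fin N) :=
    Finset.univ.filter fun i => Dh.mulVec u i ≠ 0 ∨ Dv.mulVec u i ≠ 0 with hS
  have huV : u ∈ V S := by
    intro i hi
    rw [hS, Finset.mem_filter] at hi
    push_neg at hi
    have := hi (Finset.mem_univ i)
    exact ⟨this.1, this.2⟩
  have hcard : (l02 (Dh.mulVec u) (Dv.mulVec u) : ℝ) = S.card := by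
    rw [l02, hS]
  have : φ (us S0) ≤ φ u := by
    calc φ (us S0) ≤ φ (us S) := hS0 S (Finset.mem_univ S)
      _ ≤ 1 / 2 * ‖gE - f u‖ ^ 2 + μ * S.card := key S u huV
      _ = φ u := by rw [hφ]; simp only [hfe, hcard]
  exact this
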